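/- Let Ω ⊆ ℝ^m be open with C^∞ Christoffel symbols Γ^λ_{μν} : Ω → ℝ, let φ : W → Ω be a geodesic flow, let γ : I → Ω be a C^∞ curve, and let f(t,s) = φ(γ(t), γ'(t), s) be the ∇-tangent surface, defined on an open neighborhood V of I × {0} in I × ℝ. Then: (i) there exists a C^∞ map F : V → ℝ^m with s · F(t,s) = ∂f/∂t(t,s) − ∂f/∂s(t,s) on V and F(t,0) = (∇²γ)(t) for all t ∈ I; (ii) if moreover (∇γ)(t₀) and (∇²γ)(t₀) are linearly independent, then there is an open neighborhood of (t₀,0) on which the differential of f at (t,s) has rank 2 if s ≠ 0 and rank 1 if s = 0 (so the singular locus of f near (t₀,0) is exactly {s = 0}). -/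

import Mathlib

set_option synthInstance.maxHeartbeats 1000000
set_option maxHeartbeats 1000000
open Set Metric intervalIntegral MeasureTheory
open scoped ContDiff

noncomputable section
variable {E : Type} [NormedAddCommGroup E] [NormedSpace ℝ E] [CompleteSpace E]

/-- tube lemma -/
lemma tube_lemma' {Y : Set ((ℝ × ℝ) × ℝ)} (hY : IsOpen Y) {x₀ : ℝ × ℝ}
    (h : ∀ σ ∈ Icc (0:ℝ) 1, (x₀, σ) ∈ Y) :
    ∃ δ > 0, closedBall x₀ δ ×ˢ Icc (0:ℝ) 1 ⊆ Y := by
  have hK : IsCompact (({x₀} : Set (ℝ × ℝ)) ×ˢ Icc (0:ℝ) 1) :=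
    isCompact_singleton.prod isCompact_Icc
  have hKY : ({x₀} : Set (ℝ × ℝ)) ×ˢ Icc (0:ℝ) 1 ⊆ Y := by
    rintro ⟨x, σ⟩ ⟨hx, hσ⟩
    simp only [mem_singleton_iff] at hx
    subst hx; exact h σ hσ
  obtain ⟨δ, hδpos, hδ⟩ := hK.exists_thickening_subset_open hY hKY
  refine ⟨δ / 2, by linarith, ?_⟩
  rintro ⟨x, σ⟩ ⟨hx, hσ⟩
  apply hδ
  rw [Metric.mem_thickening_iff]
  refine ⟨(x₀, σ), ⟨rfl, hσ⟩, ?_⟩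
  have : dist ((x, σ) : (ℝ × ℝ) × ℝ) (x₀, σ) ≤ δ / 2 := by
    rw [Prod.dist_eq]
    simp only [dist_self]
    exact max_le (mem_closedBall.1 hx) (by linarith)
  linarith

lemma isOpen_good {Y : Set ((ℝ × ℝ) × ℝ)} (hY : IsOpen Y) :
    IsOpen {x : ℝ × ℝ | ∀ σ ∈ Icc (0:ℝ) 1, (x, σ) ∈ Y} := by
  rw [Metric.isOpen_iff]
  intro x hx
  obtain ⟨δ, hδpos, hδ⟩ := tube_lemma' hY hx
  exact ⟨δ, hδpos, fun y hy σ hσ => hδ ⟨ball_subset_closedBall hy, hσ⟩⟩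

lemma hasFDerivAt_parint {Y : Set ((ℝ × ℝ) × ℝ)} (hY : IsOpen Y) (h : (ℝ × ℝ) × ℝ → E)
    (hh : ContDiffOn ℝ (⊤ : ℕ∞) h Y) {x₀ : ℝ × ℝ}
    (hx : ∀ σ ∈ Icc (0:ℝ) 1, (x₀, σ) ∈ Y) (δ : ℝ) (hδpos : 0 < δ)
    (hδ : closedBall x₀ δ ×ˢ Icc (0:ℝ) 1 ⊆ Y) :
    HasFDerivAt (fun x => ∫ σ in (0:ℝ)..1, h (x, σ))
      (∫ σ in (0:ℝ)..1, (fderiv ℝ h (x₀, σ)).comp (ContinuousLinearMap.inl ℝ (ℝ × ℝ) ℝ)) x₀ := by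
  have hcont : ContinuousOn h Y := hh.continuousOn
  have hfd : ContinuousOn (fderiv ℝ h) Y :=
    hh.continuousOn_fderiv_of_isOpen hY (by exact_mod_cast le_top)
  have hdiff : ∀ q ∈ Y, HasFDerivAt h (fderiv ℝ h q) q := fun q hq =>
    ((hh.differentiableOn (by simp) q hq).differentiableAt
      (hY.mem_nhds hq)).hasFDerivAt
  have hB : IsCompact (closedBall x₀ δ ×ˢ Icc (0:ℝ) 1) :=
    (isCompact_closedBall _ _).prod isCompact_Icc
  obtain ⟨C, hC⟩ := hB.exists_bound_of_continuousOn (hfd.mono hδ)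
  -- partial derivatives
  have hpart : ∀ x σ, (x, σ) ∈ Y →
      HasFDerivAt (fun y => h (y, σ))
        ((fderiv ℝ h (x, σ)).comp (ContinuousLinearMap.inl ℝ (ℝ × ℝ) ℝ)) x := by
    intro x σ hq
    exact (hdiff _ hq).comp x (hasFDerivAt_prodMk_left x σ)
  have hIoc : uIoc (0:ℝ) 1 ⊆ Icc (0:ℝ) 1 := by
    rw [uIoc_of_le (by norm_num : (0:ℝ) ≤ 1)]; exact Ioc_subset_Icc_self
  apply intervalIntegral.hasFDerivAt_integral_of_dominated_of_fderiv_le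
    (F' := fun x σ => (fderiv ℝ h (x, σ)).comp (ContinuousLinearMap.inl ℝ (ℝ × ℝ) ℝ))
    (bound := fun _ => C * 1) (Metric.ball_mem_nhds x₀ hδpos)
  · filter_upwards [Metric.ball_mem_nhds x₀ hδpos] with x hx'
    have hcx : ContinuousOn (fun σ => h (x, σ)) (Icc (0:ℝ) 1) :=
      hcont.comp ((continuous_const.prodMk continuous_id).continuousOn)
        (fun σ hσ => hδ ⟨ball_subset_closedBall hx', hσ⟩)
    exact (hcx.mono hIoc).aestronglyMeasurable measurableSet_uIoc
  · -- integrability of F x₀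
    apply ContinuousOn.intervalIntegrable
    rw [uIcc_of_le (by norm_num : (0:ℝ) ≤ 1)]
    exact hcont.comp ((continuous_const.prodMk continuous_id).continuousOn)
      (fun σ hσ => hδ ⟨mem_closedBall_self hδpos.le, hσ⟩)
  · -- measurability of F' x₀
    have hcx : ContinuousOn (fun σ => (fderiv ℝ h (x₀, σ)).comp
        (ContinuousLinearMap.inl ℝ (ℝ × ℝ) ℝ)) (Icc (0:ℝ) 1) := by
      apply ContinuousOn.clm_comp _ continuousOn_const
      exact hfd.comp ((continuous_const.prodMk continuous_id).continuousOn)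
        (fun σ hσ => hδ ⟨mem_closedBall_self hδpos.le, hσ⟩)
    exact (hcx.mono hIoc).aestronglyMeasurable measurableSet_uIoc
  · -- bound
    filter_upwards with σ
    intro hσ x hx'
    have hq : ((x, σ) : (ℝ × ℝ) × ℝ) ∈ closedBall x₀ δ ×ˢ Icc (0:ℝ) 1 :=
      ⟨ball_subset_closedBall hx', hIoc hσ⟩
    calc ‖(fderiv ℝ h (x, σ)).comp (ContinuousLinearMap.inl ℝ (ℝ × ℝ) ℝ)‖
        ≤ ‖fderiv ℝ h (x, σ)‖ * ‖ContinuousLinearMap.inl ℝ (ℝ × ℝ) ℝ‖ :=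
          ContinuousLinearMap.opNorm_comp_le _ _
      _ ≤ C * 1 := by
          have hC0 : 0 ≤ C := (norm_nonneg _).trans
            (hC (x₀, 0) ⟨mem_closedBall_self hδpos.le, by norm_num⟩)
          apply mul_le_mul (hC _ hq) _ (norm_nonneg _) hC0
          apply ContinuousLinearMap.opNorm_le_bound _ zero_le_one
          intro z
          rw [one_mul]
          simp [Prod.norm_def]
  · exact intervalIntegrable_const
  · -- differentiability
    filter_upwards with σ
    intro hσ x hx'
    exact hpart x σ (hδ ⟨ball_subset_closedBall hx', hIoc hσ⟩)


lemma hasFDerivAt_parint' {Y : Set ((ℝ × ℝ) × ℝ)} (hY : IsOpen Y) (h : (ℝ × ℝ) × ℝ → E)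
    (hh : ContDiffOn ℝ (⊤ : ℕ∞) h Y) {x₀ : ℝ × ℝ}
    (hx : ∀ σ ∈ Icc (0:ℝ) 1, (x₀, σ) ∈ Y) :
    HasFDerivAt (fun x => ∫ σ in (0:ℝ)..1, h (x, σ))
      (∫ σ in (0:ℝ)..1, (fderiv ℝ h (x₀, σ)).comp (ContinuousLinearMap.inl ℝ (ℝ × ℝ) ℝ)) x₀ := by
  obtain ⟨δ, hδpos, hδ⟩ := tube_lemma' hY hx
  exact hasFDerivAt_parint hY h hh hx δ hδpos hδ

lemma contDiffOn_parint (n : ℕ) {E : Type} [instE1 : NormedAddCommGroup E]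
    [instE2 : NormedSpace ℝ E] [instE3 : CompleteSpace E] {Y : Set ((ℝ × ℝ) × ℝ)}
    (hY : IsOpen Y) (h : (ℝ × ℝ) × ℝ → E) (hh : ContDiffOn ℝ (⊤ : ℕ∞) h Y) :
    ContDiffOn ℝ n (fun x => ∫ σ in (0:ℝ)..1, h (x, σ))
      {x : ℝ × ℝ | ∀ σ ∈ Icc (0:ℝ) 1, (x, σ) ∈ Y} := by
  induction n generalizing E with
  | zero =>
    rw [Nat.cast_zero, contDiffOn_zero]
    intro x hx
    exact (hasFDerivAt_parint' hY h hh hx).continuousAt.continuousWithinAt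
  | succ n ih =>
    set U := {x : ℝ × ℝ | ∀ σ ∈ Icc (0:ℝ) 1, (x, σ) ∈ Y} with hU
    have hUo : IsOpen U := isOpen_good hY
    have key : ∀ x ∈ U, HasFDerivAt (fun x => ∫ σ in (0:ℝ)..1, h (x, σ))
        (∫ σ in (0:ℝ)..1, (fderiv ℝ h (x, σ)).comp (ContinuousLinearMap.inl ℝ (ℝ × ℝ) ℝ)) x :=
      fun x hx => hasFDerivAt_parint' hY h hh hx
    have hcast : ((n + 1 : ℕ) : WithTop ℕ∞) = (n : WithTop ℕ∞) + 1 := by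
      push_cast; rfl
    rw [hcast, contDiffOn_succ_iff_fderiv_of_isOpen hUo]
    refine ⟨fun x hx => (key x hx).differentiableAt.differentiableWithinAt, ?_, ?_⟩
    · intro hω; exact absurd hω (WithTop.natCast_ne_top n)
    · have hH : ContDiffOn ℝ (⊤ : ℕ∞)
          (fun q => (fderiv ℝ h q).comp (ContinuousLinearMap.inl ℝ (ℝ × ℝ) ℝ)) Y := by
        apply ContDiffOn.clm_comp _ contDiffOn_const
        exact hh.fderiv_of_isOpen hY (by exact_mod_cast le_top)
      have := ih _ hH
      apply this.congr
      intro x hx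
      exact ((key x hx).fderiv)


open Set

noncomputable section

/-- Iterated covariant derivative of a curve `γ` with respect to the Christoffel
symbols `Γ` (in local coordinates): `covDeriv Γ γ k` is `∇^{k+1} γ`, i.e.
`covDeriv Γ γ 0 = ∇γ = γ'` and
`(∇^{k+1}γ)^λ(t) = d/dt (∇^k γ)^λ(t) + Σ_{μ,ν} Γ^λ_{μν}(γ(t)) (γ^μ)'(t) (∇^k γ)^ν(t)`. -/
noncomputable def covDeriv {m : ℕ} (Γ : (Fin m → ℝ) → Fin m → Fin m → Fin m → ℝ)
    (γ : ℝ → Fin m → ℝ) : ℕ → ℝ → Fin m → ℝ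
  | 0 => deriv γ
  | k + 1 => fun t l =>
      deriv (fun u => covDeriv Γ γ k u l) t +
        ∑ μ, ∑ ν, Γ (γ t) l μ ν * deriv γ t μ * covDeriv Γ γ k t ν

/-- `φ : W → Ω` is a geodesic flow for the Christoffel symbols `Γ` on the open set
`Ω ⊆ ℝ^m`: `W ⊆ Ω × ℝ^m × ℝ` is an open neighborhood of `Ω × ℝ^m × {0}`, `φ` is `C^∞`
on `W`, and for each `(x, v)` the curve `s ↦ φ(x, v, s)` is a geodesic with
`φ(x,v,0) = x` and `∂φ/∂s(x,v,0) = v`. -/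
structure IsGeodesicFlow {m : ℕ} (Γ : (Fin m → ℝ) → Fin m → Fin m → Fin m → ℝ)
    (Ω : Set (Fin m → ℝ)) (W : Set ((Fin m → ℝ) × (Fin m → ℝ) × ℝ))
    (φ : (Fin m → ℝ) × (Fin m → ℝ) × ℝ → Fin m → ℝ) : Prop where
  isOpen_W : IsOpen W
  subset_fst : ∀ p ∈ W, p.1 ∈ Ω
  mem_zero : ∀ x ∈ Ω, ∀ v, (x, v, (0 : ℝ)) ∈ W
  smooth : ContDiffOn ℝ (⊤ : ℕ∞) φ W
  mapsTo : ∀ p ∈ W, φ p ∈ Ω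
  init_pos : ∀ x ∈ Ω, ∀ v, φ (x, v, 0) = x
  init_vel : ∀ x ∈ Ω, ∀ v, deriv (fun s => φ (x, v, s)) 0 = v
  geodesic : ∀ p ∈ W, ∀ l,
    deriv (deriv (fun s => φ (p.1, p.2.1, s) l)) p.2.2 +
      ∑ μ, ∑ ν, Γ (φ p) l μ ν * deriv (fun s => φ (p.1, p.2.1, s) μ) p.2.2 *
        deriv (fun s => φ (p.1, p.2.1, s) ν) p.2.2 = 0

/-- For the `∇`-tangent surface `f(t,s) = φ(γ(t), γ'(t), s)` of a `C^∞`
curve `γ : I → Ω`, defined on an open neighborhood `V` of `I × {0}`: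
(i) there is a `C^∞` map `F : V → ℝ^m` with `s F(t,s) = ∂f/∂t − ∂f/∂s` on `V` and
`F(t,0) = ∇²γ(t)`; (ii) if `∇γ(t₀)` and `∇²γ(t₀)` are linearly independent, then near
`(t₀,0)` the differential of `f` has rank `2` for `s ≠ 0` and rank `1` for `s = 0`. -/
theorem tangent_surface_frontal (m : ℕ)
    (Γ : (Fin m → ℝ) → Fin m → Fin m → Fin m → ℝ)
    (Ω : Set (Fin m → ℝ)) (hΩ : IsOpen Ω)
    (hΓ : ∀ l μ ν, ContDiffOn ℝ (⊤ : ℕ∞) (fun x => Γ x l μ ν) Ω)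
    (W : Set ((Fin m → ℝ) × (Fin m → ℝ) × ℝ))
    (φ : (Fin m → ℝ) × (Fin m → ℝ) × ℝ → Fin m → ℝ)
    (hφ : IsGeodesicFlow Γ Ω W φ)
    (I : Set ℝ) (hI : IsOpen I) (hI' : I.OrdConnected)
    (γ : ℝ → Fin m → ℝ) (hγ : ContDiffOn ℝ (⊤ : ℕ∞) γ I) (hγΩ : ∀ t ∈ I, γ t ∈ Ω)
    (V : Set (ℝ × ℝ)) (hV : IsOpen V) (hVI : V ⊆ I ×ˢ univ)
    (hV0 : ∀ t ∈ I, (t, (0 : ℝ)) ∈ V)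
    (hVW : ∀ p ∈ V, (γ p.1, deriv γ p.1, p.2) ∈ W)
    (f : ℝ × ℝ → Fin m → ℝ)
    (hf : ∀ p : ℝ × ℝ, f p = φ (γ p.1, deriv γ p.1, p.2)) :
    (∃ F : ℝ × ℝ → Fin m → ℝ,
      ContDiffOn ℝ (⊤ : ℕ∞) F V ∧
      (∀ p ∈ V, p.2 • F p =
        deriv (fun u => f (u, p.2)) p.1 - deriv (fun u => f (p.1, u)) p.2) ∧
      ∀ t ∈ I, F (t, 0) = covDeriv Γ γ 1 t) ∧
    ∀ t₀ ∈ I,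
      LinearIndependent ℝ ![covDeriv Γ γ 0 t₀, covDeriv Γ γ 1 t₀] →
      ∃ U : Set (ℝ × ℝ), IsOpen U ∧ (t₀, (0 : ℝ)) ∈ U ∧ U ⊆ V ∧
        ∀ p ∈ U,
          (p.2 ≠ 0 →
            LinearMap.rank ((fderiv ℝ f p) : (ℝ × ℝ) →ₗ[ℝ] (Fin m → ℝ)) = 2) ∧
          (p.2 = 0 →
            LinearMap.rank ((fderiv ℝ f p) : (ℝ × ℝ) →ₗ[ℝ] (Fin m → ℝ)) = 1) := by
  classical
  -- basic facts
  have hVI' : ∀ p ∈ V, p.1 ∈ I := fun p hp => (hVI hp).1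
  have htop : ((⊤:ℕ∞) : WithTop ℕ∞) = ∞ := rfl
  -- smoothness of f on V
  have hγ' : ContDiffOn ℝ (⊤:ℕ∞) (deriv γ) I := by
    exact hγ.deriv_of_isOpen hI (le_of_eq rfl)
  have hfV : ContDiffOn ℝ (⊤:ℕ∞) f V := by
    have hG : ContDiffOn ℝ (⊤:ℕ∞) (fun p : ℝ × ℝ => (γ p.1, deriv γ p.1, p.2)) V := by
      apply ContDiffOn.prodMk
      · exact hγ.comp (contDiff_fst.contDiffOn) hVI'
      · exact ContDiffOn.prodMk (hγ'.comp (contDiff_fst.contDiffOn) hVI')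
          (contDiff_snd.contDiffOn)
    exact (hφ.smooth.comp hG hVW).congr (fun p _ => hf p)
  have hdiffat : ∀ p ∈ V, DifferentiableAt ℝ f p := fun p hp =>
    (hfV.differentiableOn (by simp) p hp).differentiableAt (hV.mem_nhds hp)
  set g : ℝ × ℝ → Fin m → ℝ :=
    fun p => fderiv ℝ f p (1, 0) - fderiv ℝ f p (0, 1) with hgdef
  have hgV : ContDiffOn ℝ (⊤:ℕ∞) g V := by
    have h1 : ContDiffOn ℝ (⊤:ℕ∞) (fderiv ℝ f) V := by
      exact hfV.fderiv_of_isOpen hV (le_of_eq rfl)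
    exact (h1.clm_apply contDiffOn_const).sub (h1.clm_apply contDiffOn_const)
  -- partial derivatives
  have hpfst : ∀ p : ℝ × ℝ, DifferentiableAt ℝ f p →
      HasDerivAt (fun u => f (u, p.2)) (fderiv ℝ f p (1, 0)) p.1 := by
    intro p hp
    have h1 : HasDerivAt (fun u : ℝ => ((u, p.2) : ℝ × ℝ)) (1, 0) p.1 :=
      (hasDerivAt_id p.1).prodMk (hasDerivAt_const p.1 p.2)
    exact hp.hasFDerivAt.comp_hasDerivAt p.1 h1
  have hpsnd : ∀ p : ℝ × ℝ, DifferentiableAt ℝ f p →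
      HasDerivAt (fun u => f (p.1, u)) (fderiv ℝ f p (0, 1)) p.2 := by
    intro p hp
    have h1 : HasDerivAt (fun u : ℝ => ((p.1, u) : ℝ × ℝ)) (0, 1) p.2 :=
      (hasDerivAt_const p.2 p.1).prodMk (hasDerivAt_id p.2)
    exact hp.hasFDerivAt.comp_hasDerivAt p.2 h1
  -- value of ∂ₛf on {s = 0}
  have hb0 : ∀ t ∈ I, fderiv ℝ f (t, 0) (0, 1) = deriv γ t := by
    intro t ht
    have h1 := (hpsnd (t, 0) (hdiffat _ (hV0 t ht))).deriv
    have h2 : (fun u => f (t, u)) = fun u => φ (γ t, deriv γ t, u) := by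
      funext u; exact hf (t, u)
    rw [h2] at h1
    rw [← h1, hφ.init_vel (γ t) (hγΩ t ht) (deriv γ t)]
  have ha0 : ∀ t ∈ I, fderiv ℝ f (t, 0) (1, 0) = deriv γ t := by
    intro t ht
    have h1 := (hpfst (t, 0) (hdiffat _ (hV0 t ht))).deriv
    have h2 : (fun u => f (u, 0)) =ᶠ[nhds t] γ := by
      filter_upwards [hI.mem_nhds ht] with u hu
      rw [hf (u, 0), hφ.init_pos (γ u) (hγΩ u hu) (deriv γ u)]
    rw [h2.deriv_eq] at h1
    exact h1.symm
  have hg0 : ∀ t ∈ I, g (t, 0) = 0 := by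
    intro t ht
    simp only [hgdef, ha0 t ht, hb0 t ht, sub_self]
  -- the Hadamard quotient
  set F : ℝ × ℝ → Fin m → ℝ :=
    (fun p => if p.2 = 0 then fderiv ℝ g p (0, 1) else p.2⁻¹ • g p) with hFdef
  set h : (ℝ × ℝ) × ℝ → Fin m → ℝ :=
    (fun q => fderiv ℝ g (q.1.1, q.2 * q.1.2) (0, 1)) with hhdef
  set Y : Set ((ℝ × ℝ) × ℝ) := {q | (q.1.1, q.2 * q.1.2) ∈ V} with hYdef
  have hmapc : Continuous (fun q : (ℝ × ℝ) × ℝ => ((q.1.1, q.2 * q.1.2) : ℝ × ℝ)) :=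
    (continuous_fst.fst).prodMk (continuous_snd.mul continuous_fst.snd)
  have hYo : IsOpen Y := hV.preimage hmapc
  have hgd : ContDiffOn ℝ (⊤:ℕ∞) (fderiv ℝ g) V := hgV.fderiv_of_isOpen hV (le_of_eq rfl)
  have hhY : ContDiffOn ℝ (⊤:ℕ∞) h Y := by
    have hmap : ContDiffOn ℝ (⊤:ℕ∞) (fun q : (ℝ × ℝ) × ℝ => ((q.1.1, q.2 * q.1.2) : ℝ × ℝ)) Y :=
      (((contDiff_fst.fst).prodMk (contDiff_snd.mul contDiff_fst.snd)).contDiffOn)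
    exact ((hgd.comp hmap (fun q hq => hq)).clm_apply contDiffOn_const)
  set UStar : Set (ℝ × ℝ) := {x : ℝ × ℝ | ∀ σ ∈ Icc (0:ℝ) 1, (x, σ) ∈ Y} with hUSdef
  have hUso : IsOpen UStar := isOpen_good hYo
  have hUV : UStar ⊆ V := by
    intro x hx
    have := hx 1 ⟨zero_le_one, le_refl 1⟩
    simpa [hYdef] using this
  have hmemUS : ∀ p ∈ V, p.2 = 0 → p ∈ UStar := by
    intro p hp hs σ _
    show ((p.1, σ * p.2) : ℝ × ℝ) ∈ V
    rw [hs, mul_zero, ← hs]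
    exact hp
  have hgdiffat : ∀ q ∈ V, DifferentiableAt ℝ g q := fun q hq =>
    (hgV.differentiableOn (by simp) q hq).differentiableAt (hV.mem_nhds hq)
  have hrep : ∀ p ∈ UStar, F p = ∫ σ in (0:ℝ)..1, h (p, σ) := by
    intro p hp
    by_cases hs : p.2 = 0
    · have hps : p = (p.1, 0) := by rw [← hs]
      have hconst : (fun σ => h (p, σ)) = fun _ : ℝ => fderiv ℝ g p (0, 1) := by
        funext σ; simp only [hhdef, hs, mul_zero]; rw [← hps]
      rw [hconst, intervalIntegral.integral_const]
      simp [hFdef, hs]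
    · have hIccUIcc : uIcc (0:ℝ) 1 = Icc (0:ℝ) 1 := uIcc_of_le zero_le_one
      have hmemV : ∀ σ ∈ Icc (0:ℝ) 1, ((p.1, σ * p.2) : ℝ × ℝ) ∈ V := fun σ hσ => hp σ hσ
      have hcint : ContinuousOn (fun σ => h (p, σ)) (uIcc (0:ℝ) 1) := by
        rw [hIccUIcc]
        exact hhY.continuousOn.comp ((continuous_const.prodMk continuous_id).continuousOn)
          (fun σ hσ => hmemV σ hσ)
      have hder : ∀ σ ∈ uIcc (0:ℝ) 1,
          HasDerivAt (fun σ => g (p.1, σ * p.2)) (p.2 • h (p, σ)) σ := by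
        intro σ hσ
        rw [hIccUIcc] at hσ
        have hσV : ((p.1, σ * p.2) : ℝ × ℝ) ∈ V := hmemV σ hσ
        have hc : HasDerivAt (fun σ : ℝ => ((p.1, σ * p.2) : ℝ × ℝ)) (0, p.2) σ := by
          have h2 : HasDerivAt (fun σ : ℝ => σ * p.2) p.2 σ := by
            simpa using (hasDerivAt_id σ).mul_const p.2
          exact (hasDerivAt_const σ p.1).prodMk h2
        have hcomp := (hgdiffat _ hσV).hasFDerivAt.comp_hasDerivAt σ hc
        refine hcomp.congr_deriv ?_
        have hsm : ((0 : ℝ), p.2) = p.2 • ((0:ℝ), (1:ℝ)) := by simp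
        rw [hhdef, hsm, ContinuousLinearMap.map_smul]
      have hFTC := intervalIntegral.integral_eq_sub_of_hasDerivAt hder
        ((hcint.const_smul p.2).intervalIntegrable)
      rw [intervalIntegral.integral_smul] at hFTC
      have h10 : g (p.1, (1:ℝ) * p.2) = g p := by rw [one_mul]
      have h00 : g (p.1, (0:ℝ) * p.2) = 0 := by
        rw [zero_mul]
        exact hg0 p.1 (hVI' p (hUV hp))
      rw [h10, h00, sub_zero] at hFTC
      rw [hFdef]
      simp only [if_neg hs]
      rw [← hFTC, smul_smul, inv_mul_cancel₀ hs, one_smul]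
  have hFsm : ContDiffOn ℝ (⊤:ℕ∞) F V := by
    intro p hp
    by_cases hs : p.2 = 0
    · have hpU : p ∈ UStar := hmemUS p hp hs
      have hint : ContDiffOn ℝ (⊤:ℕ∞) (fun x => ∫ σ in (0:ℝ)..1, h (x, σ)) UStar :=
        contDiffOn_infty.2 fun n => contDiffOn_parint n hYo h hhY
      exact ((hint.congr (fun x hx => hrep x hx)).contDiffAt
        (hUso.mem_nhds hpU)).contDiffWithinAt
    · have hop : IsOpen (V ∩ {q : ℝ × ℝ | q.2 ≠ 0}) :=
        hV.inter (isOpen_compl_singleton.preimage continuous_snd)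
      have hsm2 : ContDiffOn ℝ (⊤:ℕ∞) (fun q : ℝ × ℝ => q.2⁻¹ • g q)
          (V ∩ {q : ℝ × ℝ | q.2 ≠ 0}) := by
        apply ContDiffOn.fun_smul _ (hgV.mono inter_subset_left)
        exact (contDiff_snd.contDiffOn).inv (fun q hq => hq.2)
      have heq : ∀ q ∈ V ∩ {q : ℝ × ℝ | q.2 ≠ 0}, F q = q.2⁻¹ • g q := by
        intro q hq; rw [hFdef]; simp only [if_neg hq.2]
      exact (((hsm2.congr heq).contDiffAt
        (hop.mem_nhds ⟨hp, hs⟩)).contDiffWithinAt)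
  have hkey : ∀ p ∈ V, p.2 • F p = g p := by
    intro p hp
    by_cases hs : p.2 = 0
    · have hps : p = (p.1, 0) := by rw [← hs]
      rw [hs, zero_smul]
      rw [hps]
      exact (hg0 p.1 (hVI' p hp)).symm
    · rw [hFdef]
      simp only [if_neg hs]
      rw [smul_smul, mul_inv_cancel₀ hs, one_smul]
  -- value of F on the zero section
  have hfd1 : ContDiffOn ℝ (⊤:ℕ∞) (fderiv ℝ f) V := hfV.fderiv_of_isOpen hV (le_of_eq rfl)
  have hF0 : ∀ t ∈ I, F (t, 0) = covDeriv Γ γ 1 t := by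
    intro t ht
    have hp₀ : ((t, 0) : ℝ × ℝ) ∈ V := hV0 t ht
    have hfd1at : DifferentiableAt ℝ (fderiv ℝ f) (t, 0) :=
      (hfd1.differentiableOn (by simp) _ hp₀).differentiableAt
        (hV.mem_nhds hp₀)
    set A := fderiv ℝ (fderiv ℝ f) (t, 0) with hAdef
    have hA : HasFDerivAt (fderiv ℝ f) A (t, 0) := hfd1at.hasFDerivAt
    set e₁ : ((ℝ × ℝ) →L[ℝ] (Fin m → ℝ)) →L[ℝ] (Fin m → ℝ) :=
      ContinuousLinearMap.apply ℝ (Fin m → ℝ) ((1, 0) : ℝ × ℝ) with he₁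
    set e₂ : ((ℝ × ℝ) →L[ℝ] (Fin m → ℝ)) →L[ℝ] (Fin m → ℝ) :=
      ContinuousLinearMap.apply ℝ (Fin m → ℝ) ((0, 1) : ℝ × ℝ) with he₂
    -- step 1 : derivative of g at (t,0)
    have ha' : HasFDerivAt (fun q => fderiv ℝ f q ((1, 0) : ℝ × ℝ)) (e₁.comp A) (t, 0) :=
      e₁.hasFDerivAt.comp _ hA
    have hb' : HasFDerivAt (fun q => fderiv ℝ f q ((0, 1) : ℝ × ℝ)) (e₂.comp A) (t, 0) :=
      e₂.hasFDerivAt.comp _ hA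
    have hg' : HasFDerivAt g ((e₁.comp A) - (e₂.comp A)) (t, 0) := ha'.sub hb'
    have hstep1 : fderiv ℝ g (t, 0) ((0, 1) : ℝ × ℝ) =
        A ((0, 1) : ℝ × ℝ) ((1, 0) : ℝ × ℝ) - A ((0, 1) : ℝ × ℝ) ((0, 1) : ℝ × ℝ) := by
      rw [hg'.fderiv]; rfl
    -- step 2 : symmetry of the second derivative
    have hsymm : A ((0, 1) : ℝ × ℝ) ((1, 0) : ℝ × ℝ) =
        A ((1, 0) : ℝ × ℝ) ((0, 1) : ℝ × ℝ) := by
      apply second_derivative_symmetric_of_eventually (f := f) (f' := fderiv ℝ f) _ hA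
      filter_upwards [hV.mem_nhds hp₀] with q hq using (hdiffat q hq).hasFDerivAt
    -- step 3 : the mixed derivative is (deriv γ)'
    have hcurve : HasDerivAt (fun u : ℝ => ((u, 0) : ℝ × ℝ)) ((1, 0) : ℝ × ℝ) t :=
      (hasDerivAt_id t).prodMk (hasDerivAt_const t 0)
    have h3 : HasDerivAt (fun u : ℝ => fderiv ℝ f (u, 0)) (A ((1, 0) : ℝ × ℝ)) t :=
      hA.comp_hasDerivAt t hcurve
    have h3' : HasDerivAt (fun u : ℝ => fderiv ℝ f (u, 0) ((0, 1) : ℝ × ℝ))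
        (A ((1, 0) : ℝ × ℝ) ((0, 1) : ℝ × ℝ)) t := e₂.hasFDerivAt.comp_hasDerivAt t h3
    have hev : (fun u : ℝ => fderiv ℝ f (u, 0) ((0, 1) : ℝ × ℝ)) =ᶠ[nhds t] deriv γ := by
      filter_upwards [hI.mem_nhds ht] with u hu using hb0 u hu
    have h4 : HasDerivAt (deriv γ) (A ((1, 0) : ℝ × ℝ) ((0, 1) : ℝ × ℝ)) t :=
      h3'.congr_of_eventuallyEq hev.symm
    -- step 4 : the second s-derivative
    have hcurve2 : HasDerivAt (fun s : ℝ => ((t, s) : ℝ × ℝ)) ((0, 1) : ℝ × ℝ) 0 :=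
      (hasDerivAt_const 0 t).prodMk (hasDerivAt_id 0)
    have h5 : HasDerivAt (fun s : ℝ => fderiv ℝ f (t, s) ((0, 1) : ℝ × ℝ))
        (A ((0, 1) : ℝ × ℝ) ((0, 1) : ℝ × ℝ)) 0 :=
      e₂.hasFDerivAt.comp_hasDerivAt 0 (hA.comp_hasDerivAt 0 hcurve2)
    set c : ℝ → Fin m → ℝ := fun s => φ (γ t, deriv γ t, s) with hcdef
    have hVnbhd : {s : ℝ | ((t, s) : ℝ × ℝ) ∈ V} ∈ nhds (0 : ℝ) := by
      have : IsOpen {s : ℝ | ((t, s) : ℝ × ℝ) ∈ V} :=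
        hV.preimage (continuous_const.prodMk continuous_id)
      exact this.mem_nhds hp₀
    have hfc : ∀ s : ℝ, (fun u => f (t, u)) = c := by
      intro s; funext u; exact hf (t, u)
    have hev2 : (fun s : ℝ => fderiv ℝ f (t, s) ((0, 1) : ℝ × ℝ)) =ᶠ[nhds 0] deriv c := by
      filter_upwards [hVnbhd] with s hs
      have hd := (hpsnd (t, s) (hdiffat _ hs)).deriv
      rw [hfc s] at hd
      exact hd.symm
    have h6 : HasDerivAt (deriv c) (A ((0, 1) : ℝ × ℝ) ((0, 1) : ℝ × ℝ)) 0 :=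
      h5.congr_of_eventuallyEq hev2.symm
    -- differentiability of c near 0
    have hWc : IsOpen {s : ℝ | (γ t, deriv γ t, s) ∈ W} :=
      hφ.isOpen_W.preimage (by continuity)
    have hWc0 : (0 : ℝ) ∈ {s : ℝ | (γ t, deriv γ t, s) ∈ W} :=
      hφ.mem_zero (γ t) (hγΩ t ht) (deriv γ t)
    have hcdiff : ∀ s : ℝ, (γ t, deriv γ t, s) ∈ W → DifferentiableAt ℝ c s := by
      intro s hs
      have hφd : DifferentiableAt ℝ φ (γ t, deriv γ t, s) :=
        (hφ.smooth.differentiableOn (by simp) _ hs).differentiableAt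
          (hφ.isOpen_W.mem_nhds hs)
      exact hφd.comp s (by fun_prop)
    -- conclude, componentwise
    have hFt0 : F (t, 0) = fderiv ℝ g (t, 0) ((0, 1) : ℝ × ℝ) := by
      simp only [hFdef]
      simp
    funext l
    have hmix : deriv (fun u => deriv γ u l) t =
        A ((1, 0) : ℝ × ℝ) ((0, 1) : ℝ × ℝ) l := (hasDerivAt_pi.1 h4 l).deriv
    have hevc : (fun s : ℝ => deriv c s l) =ᶠ[nhds 0] deriv (fun s => c s l) := by
      filter_upwards [hWc.mem_nhds hWc0] with s hs
      have := hasDerivAt_pi.1 (hcdiff s hs).hasDerivAt l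
      exact this.deriv.symm
    have h7 : HasDerivAt (deriv (fun s => c s l))
        (A ((0, 1) : ℝ × ℝ) ((0, 1) : ℝ × ℝ) l) 0 :=
      (hasDerivAt_pi.1 h6 l).congr_of_eventuallyEq hevc.symm
    have hgeo := hφ.geodesic (γ t, deriv γ t, 0)
      (hφ.mem_zero (γ t) (hγΩ t ht) (deriv γ t)) l
    simp only at hgeo
    have hc0 : deriv c 0 = deriv γ t := hφ.init_vel (γ t) (hγΩ t ht) (deriv γ t)
    have hcμ : ∀ μ, deriv (fun s => c s μ) 0 = deriv γ t μ := by
      intro μ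
      have := hasDerivAt_pi.1 (hcdiff 0 hWc0).hasDerivAt μ
      rw [this.deriv, hc0]
    have hφ0 : φ (γ t, deriv γ t, 0) = γ t := hφ.init_pos (γ t) (hγΩ t ht) (deriv γ t)
    have hcomp_eq : ∀ μ, (fun s => φ (γ t, deriv γ t, s) μ) = (fun s => c s μ) :=
      fun μ => rfl
    have hgeo' : deriv (deriv (fun s => c s l)) 0 =
        -∑ μ, ∑ ν, Γ (γ t) l μ ν * deriv γ t μ * deriv γ t ν := by
      have h8 : deriv (deriv (fun s => c s l)) 0 +
          ∑ μ, ∑ ν, Γ (γ t) l μ ν * deriv γ t μ * deriv γ t ν = 0 := by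
        rw [hφ0] at hgeo
        simp only [hcomp_eq, hcμ] at hgeo
        exact hgeo
      linarith
    calc F (t, 0) l = A ((0, 1) : ℝ × ℝ) ((1, 0) : ℝ × ℝ) l -
          A ((0, 1) : ℝ × ℝ) ((0, 1) : ℝ × ℝ) l := by rw [hFt0, hstep1]; rfl
      _ = deriv (fun u => deriv γ u l) t +
          ∑ μ, ∑ ν, Γ (γ t) l μ ν * deriv γ t μ * deriv γ t ν := by
          rw [hsymm, ← hmix, ← h7.deriv, hgeo', sub_neg_eq_add]
      _ = covDeriv Γ γ 1 t l := by simp [covDeriv]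
  -- Assemble part (i) and prove part (ii)
  constructor
  · refine ⟨F, hFsm, ?_, hF0⟩
    intro p hp
    rw [(hpfst p (hdiffat p hp)).deriv, (hpsnd p (hdiffat p hp)).deriv]
    exact hkey p hp
  · -- part (ii)
    intro t₀ ht₀ hli
    set v₀ : Fin m → ℝ := covDeriv Γ γ 0 t₀ with hv₀
    set w₀ : Fin m → ℝ := covDeriv Γ γ 1 t₀ with hw₀
    have hv0eq : v₀ = deriv γ t₀ := rfl
    -- a helper: a nonzero 2×2 minor implies linear independence
    have hminor_li : ∀ (v w : Fin m → ℝ) (i j : Fin m),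
        v i * w j - v j * w i ≠ 0 → LinearIndependent ℝ ![v, w] := by
      intro v w i j hm
      rw [LinearIndependent.pair_iff]
      intro x y hxy
      have h1 : x * v i + y * w i = 0 := by
        have := congrFun hxy i; simpa using this
      have h2 : x * v j + y * w j = 0 := by
        have := congrFun hxy j; simpa using this
      have hx : x * (v i * w j - v j * w i) = 0 := by linear_combination w j * h1 - w i * h2
      have hy : y * (v i * w j - v j * w i) = 0 := by linear_combination v i * h2 - v j * h1
      exact ⟨(mul_eq_zero.1 hx).resolve_right hm, (mul_eq_zero.1 hy).resolve_right hm⟩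
    -- existence of a nonzero minor for (v₀, w₀)
    obtain ⟨i, j, hij⟩ : ∃ i j, v₀ i * w₀ j - v₀ j * w₀ i ≠ 0 := by
      by_contra hcon
      push_neg at hcon
      have hv0ne : v₀ ≠ 0 := by
        have := hli.ne_zero 0
        simpa [hv0eq] using this
      obtain ⟨i, hi⟩ := Function.ne_iff.1 hv0ne
      have hine : v₀ i ≠ 0 := by simpa using hi
      have hwv : (w₀ i / v₀ i) • v₀ + (-1 : ℝ) • w₀ = 0 := by
        funext j
        have hc := hcon i j
        simp only [Pi.add_apply, Pi.smul_apply, Pi.zero_apply, smul_eq_mul]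
        field_simp
        linarith [hc]
      have := (LinearIndependent.pair_iff.1 hli (w₀ i / v₀ i) (-1) hwv).2
      norm_num at this
    -- the determinant-like function
    set d : ℝ × ℝ → ℝ := fun p =>
      (fderiv ℝ f p ((0, 1) : ℝ × ℝ)) i * F p j - (fderiv ℝ f p ((0, 1) : ℝ × ℝ)) j * F p i
      with hddef
    have hbcont : ContinuousOn (fun p : ℝ × ℝ => fderiv ℝ f p ((0, 1) : ℝ × ℝ)) V :=
      (hfd1.clm_apply contDiffOn_const).continuousOn
    have hFcont : ContinuousOn F V := hFsm.continuousOn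
    have hdcont : ContinuousOn d V := by
      apply ContinuousOn.sub
      · exact (((continuous_apply i).comp_continuousOn hbcont).mul
          ((continuous_apply j).comp_continuousOn hFcont))
      · exact (((continuous_apply j).comp_continuousOn hbcont).mul
          ((continuous_apply i).comp_continuousOn hFcont))
    have hd0 : d (t₀, 0) ≠ 0 := by
      rw [hddef]
      simp only
      rw [hb0 t₀ ht₀, hF0 t₀ ht₀, ← hv0eq, ← hw₀]
      exact hij
    refine ⟨V ∩ d ⁻¹' ({0}ᶜ), hdcont.isOpen_inter_preimage hV isOpen_compl_singleton,
      ⟨hV0 t₀ ht₀, hd0⟩, inter_subset_left, ?_⟩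
    rintro p ⟨hpV, hpd⟩
    have hpd' : d p ≠ 0 := hpd
    -- notation
    set bb : Fin m → ℝ := fderiv ℝ f p ((0, 1) : ℝ × ℝ) with hbb
    set aa : Fin m → ℝ := fderiv ℝ f p ((1, 0) : ℝ × ℝ) with haa
    have haab : aa = bb + p.2 • F p := by
      have hthis := hkey p hpV
      simp only [hgdef, ← haa, ← hbb] at hthis
      rw [hthis]; abel
    -- the range of the differential is the span of the two partial derivatives
    have hrange : LinearMap.range ((fderiv ℝ f p) : (ℝ × ℝ) →ₗ[ℝ] (Fin m → ℝ)) =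
        Submodule.span ℝ {aa, bb} := by
      apply le_antisymm
      · rintro z ⟨u, rfl⟩
        have hu : u = u.1 • ((1, 0) : ℝ × ℝ) + u.2 • ((0, 1) : ℝ × ℝ) := by
          ext <;> simp
        show fderiv ℝ f p u ∈ _
        rw [hu, map_add, _root_.map_smul, _root_.map_smul]
        exact Submodule.add_mem _
          (Submodule.smul_mem _ _ (Submodule.subset_span (by left; rfl)))
          (Submodule.smul_mem _ _ (Submodule.subset_span (by right; rfl)))
      · rw [Submodule.span_le]
        rintro z (rfl | rfl)
        · exact ⟨((1, 0) : ℝ × ℝ), rfl⟩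
        · exact ⟨((0, 1) : ℝ × ℝ), rfl⟩
    constructor
    · -- rank 2 when s ≠ 0
      intro hs
      have hliFb : LinearIndependent ℝ ![bb, F p] := hminor_li _ _ i j hpd'
      have hliab : LinearIndependent ℝ ![aa, bb] := by
        rw [LinearIndependent.pair_iff]
        intro x y hxy
        rw [haab] at hxy
        have hxy' : (x + y) • bb + (x * p.2) • F p = 0 := by
          rw [← hxy]
          module
        obtain ⟨hxy1, hxy2⟩ := LinearIndependent.pair_iff.1 hliFb _ _ hxy'
        have hx0 : x = 0 := by
          rcases mul_eq_zero.1 hxy2 with h | h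
          · exact h
          · exact absurd h hs
        exact ⟨hx0, by linarith⟩
      have hrangeset : ({aa, bb} : Set (Fin m → ℝ)) = Set.range ![aa, bb] := by
        ext z
        simp only [Set.mem_insert_iff, Set.mem_singleton_iff, Set.mem_range,
          Fin.exists_fin_two, Matrix.cons_val_zero, Matrix.cons_val_one, Matrix.head_cons]
        tauto
      rw [LinearMap.rank, hrange, hrangeset, rank_span hliab,
        Cardinal.mk_range_eq _ hliab.injective, Cardinal.mk_fin]
      norm_num
    · -- rank 1 when s = 0
      intro hs
      have haab0 : aa = bb := by rw [haab, hs, zero_smul, add_zero]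
      have hbbne : bb ≠ 0 := by
        intro hbb0
        apply hpd'
        rw [hddef]
        simp only [← hbb, hbb0]
        simp
      have hpair : ({aa, bb} : Set (Fin m → ℝ)) = {bb} := by
        rw [haab0, Set.pair_eq_singleton]
      rw [LinearMap.rank, hrange, hpair]
      have hfr := finrank_span_singleton (K := ℝ) hbbne
      rw [← Module.finrank_eq_rank, hfr]
      norm_num
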